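/- For every context-free grammar g over a terminal alphabet T there is a context-free grammar g' over T generating the same language such that the right-hand side of every production of g' either consists entirely of nonterminal symbols, or is a single terminal symbol, or is the empty word. -/

import Mathlib

namespace CFGNorm

variable {T : Type}

open Classical in
/-- Nonterminals actually used by the grammar. -/
noncomputable def used (g : ContextFreeGrammar T) : Finset g.NT :=
  {g.initial} ∪ g.rules.biUnion fun r =>
    {r.input} ∪ (r.output.filterMap fun s =>
      match s with | .nonterminal n => some n | _ => none).toFinset

lemma initial_mem_used (g : ContextFreeGrammar T) : g.initial ∈ used g := by
  classical
  simp [used]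

lemma input_mem_used {g : ContextFreeGrammar T} {r : ContextFreeRule T g.NT}
    (hr : r ∈ g.rules) : r.input ∈ used g := by
  classical
  simp only [used, Finset.mem_union, Finset.mem_biUnion, Finset.mem_singleton]
  exact Or.inr ⟨r, hr, Or.inl rfl⟩

lemma output_mem_used {g : ContextFreeGrammar T} {r : ContextFreeRule T g.NT}
    (hr : r ∈ g.rules) {n : g.NT} (hn : Symbol.nonterminal n ∈ r.output) :
    n ∈ used g := by
  classical
  simp only [used, Finset.mem_union, Finset.mem_biUnion, Finset.mem_singleton,
    List.mem_toFinset, List.mem_filterMap]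
  exact Or.inr ⟨r, hr, Or.inr ⟨Symbol.nonterminal n, hn, rfl⟩⟩

variable (g : ContextFreeGrammar T)

open Classical in
/-- Encode a used nonterminal as a `Fin`. -/
noncomputable def enc (g : ContextFreeGrammar T) (x : g.NT) : Fin (used g).card :=
  if h : x ∈ used g then (used g).equivFin ⟨x, h⟩
  else (used g).equivFin ⟨g.initial, initial_mem_used g⟩

/-- Decode. -/
noncomputable def dec (g : ContextFreeGrammar T) (i : Fin (used g).card) : g.NT :=
  ((used g).equivFin.symm i).val

open Classical in
lemma dec_enc (g : ContextFreeGrammar T) {x : g.NT} (hx : x ∈ used g) :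
    dec g (enc g x) = x := by
  unfold enc
  rw [dif_pos hx]
  simp [dec]

/-- Nonterminals of the new grammar, in an arbitrary universe. -/
abbrev NT' (g : ContextFreeGrammar T) : Type :=
  ULift (Fin (used g).card ⊕ T)

/-- Embed symbols, keeping terminals. -/
noncomputable def liftSym (g : ContextFreeGrammar T) :
    Symbol T g.NT → Symbol T (NT' g)
  | .terminal t => .terminal t
  | .nonterminal n => .nonterminal ⟨Sum.inl (enc g n)⟩

/-- Embed symbols, turning terminals into fresh nonterminals. -/
noncomputable def wrapSym (g : ContextFreeGrammar T) :
    Symbol T g.NT → Symbol T (NT' g)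
  | .terminal t => .nonterminal ⟨Sum.inr t⟩
  | .nonterminal n => .nonterminal ⟨Sum.inl (enc g n)⟩

/-- Project symbols back. -/
noncomputable def projSym (g : ContextFreeGrammar T) :
    Symbol T (NT' g) → Symbol T g.NT
  | .terminal t => .terminal t
  | .nonterminal ⟨Sum.inl i⟩ => .nonterminal (dec g i)
  | .nonterminal ⟨Sum.inr t⟩ => .terminal t

open Classical in
/-- The normalized grammar. -/
@[reducible] noncomputable def normalize (g : ContextFreeGrammar T) :
    ContextFreeGrammar T where
  NT := NT' g
  initial := ⟨Sum.inl (enc g g.initial)⟩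
  rules :=
    (g.rules.image fun r =>
        ⟨⟨Sum.inl (enc g r.input)⟩, r.output.map (wrapSym g)⟩) ∪
      g.rules.biUnion fun r =>
        (r.output.filterMap fun s =>
          match s with | .terminal t => some t | _ => none).toFinset.image
          fun t => ⟨⟨Sum.inr t⟩, [Symbol.terminal t]⟩

variable {g}

lemma lift_rule_mem {g : ContextFreeGrammar T}
    (r : ContextFreeRule T g.NT) (hr : r ∈ g.rules) :
    (⟨⟨Sum.inl (enc g r.input)⟩, r.output.map (wrapSym g)⟩ :
        ContextFreeRule T (NT' g)) ∈ (normalize g).rules := by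
  classical
  simp only [normalize, Finset.mem_union, Finset.mem_image]
  exact Or.inl ⟨r, hr, rfl⟩

lemma term_rule_mem {g : ContextFreeGrammar T}
    {r : ContextFreeRule T g.NT} (hr : r ∈ g.rules) {t : T}
    (ht : Symbol.terminal t ∈ r.output) :
    (⟨⟨Sum.inr t⟩, [Symbol.terminal t]⟩ : ContextFreeRule T (NT' g)) ∈
      (normalize g).rules := by
  classical
  simp only [normalize, Finset.mem_union, Finset.mem_biUnion, Finset.mem_image,
    List.mem_toFinset, List.mem_filterMap]
  exact Or.inr ⟨r, hr, t, ⟨Symbol.terminal t, ht, rfl⟩, rfl⟩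

/-- Expand the wrapped terminals. -/
lemma derives_wrap_lift {g : ContextFreeGrammar T} {l : List (Symbol T g.NT)}
    (h : ∀ t : T, Symbol.terminal t ∈ l →
      (⟨⟨Sum.inr t⟩, [Symbol.terminal t]⟩ : ContextFreeRule T (NT' g)) ∈
        (normalize g).rules) :
    (normalize g).Derives (l.map (wrapSym g)) (l.map (liftSym g)) := by
  induction l with
  | nil => rfl
  | cons s l ih =>
    have ih' := ih fun t ht => h t (List.mem_cons_of_mem _ ht)
    cases s with
    | nonterminal n =>
      simpa [wrapSym, liftSym] using
        (ih'.append_left [Symbol.nonterminal ⟨Sum.inl (enc g n)⟩])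
    | terminal t =>
      have step : (normalize g).Produces
          (Symbol.nonterminal ⟨Sum.inr t⟩ :: l.map (wrapSym g))
          (Symbol.terminal t :: l.map (wrapSym g)) := by
        refine ⟨_, h t (List.mem_cons_self), ?_⟩
        simpa using ContextFreeRule.Rewrites.head
          (r := ⟨⟨Sum.inr t⟩, [Symbol.terminal t]⟩) (l.map (wrapSym g))
      refine step.trans_derives ?_
      simpa [wrapSym, liftSym] using (ih'.append_left [Symbol.terminal t])

lemma forward {g : ContextFreeGrammar T} {u' v' : List (Symbol T g.NT)}
    (h : g.Derives u' v') :
    (normalize g).Derives (u'.map (liftSym g)) (v'.map (liftSym g)) := by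
  induction h with
  | refl => rfl
  | tail _ hp ih =>
    obtain ⟨r, hr, hrew⟩ := hp
    obtain ⟨p, q, rfl, rfl⟩ := hrew.exists_parts
    refine ih.trans ?_
    simp only [List.map_append, List.map_cons, List.map_nil, liftSym]
    refine ContextFreeGrammar.Produces.trans_derives
      ⟨_, lift_rule_mem r hr, ContextFreeRule.rewrites_of_exists_parts _
        (p.map (liftSym g)) (q.map (liftSym g))⟩ ?_
    exact ((derives_wrap_lift fun t ht => term_rule_mem hr ht).append_left
      (p.map (liftSym g))).append_right (q.map (liftSym g))

lemma proj_wrap_output {g : ContextFreeGrammar T}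
    {r : ContextFreeRule T g.NT} (hr : r ∈ g.rules) :
    (r.output.map (wrapSym g)).map (projSym g) = r.output := by
  rw [List.map_map]
  refine List.map_congr_left (fun s hs => ?_) |>.trans (List.map_id r.output)
  cases s with
  | terminal t => rfl
  | nonterminal n =>
    simp only [Function.comp_apply, wrapSym, projSym, id_eq]
    rw [dec_enc g (output_mem_used hr hs)]

lemma backward {g : ContextFreeGrammar T}
    {u' v' : List (Symbol T (NT' g))}
    (h : (normalize g).Derives u' v') :
    g.Derives (u'.map (projSym g)) (v'.map (projSym g)) := by
  induction h with
  | refl => rfl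
  | tail _ hp ih =>
    refine ih.trans ?_
    obtain ⟨r', hr', hrew⟩ := hp
    obtain ⟨p, q, rfl, rfl⟩ := hrew.exists_parts
    classical
    simp only [normalize, Finset.mem_union, Finset.mem_image, Finset.mem_biUnion,
      List.mem_toFinset, List.mem_filterMap] at hr'
    rcases hr' with ⟨r, hr, rfl⟩ | ⟨r, hr, t, _, rfl⟩
    · refine ContextFreeGrammar.Produces.single ⟨r, hr, ?_⟩
      have := ContextFreeRule.rewrites_of_exists_parts r (p.map (projSym g))
        (q.map (projSym g))
      simpa [projSym, dec_enc g (input_mem_used hr), proj_wrap_output hr] using this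
    · simp only [List.map_append]
      simp [projSym]
      rfl

end CFGNorm

/-- Lemma 9.4: every context-free grammar can be replaced by one generating the same
language in which the right-hand side of every production consists entirely of
nonterminals, or is a single terminal, or is the empty word. -/
theorem contextFreeGrammar_normalize {T : Type} (g : ContextFreeGrammar T) :
    ∃ g' : ContextFreeGrammar T, g'.language = g.language ∧
      ∀ r ∈ g'.rules,
        (∀ s ∈ r.output, ∃ n, s = Symbol.nonterminal n) ∨
        (∃ t : T, r.output = [Symbol.terminal t]) ∨
        r.output = [] := by
  classical
  refine ⟨CFGNorm.normalize g, ?_, ?_⟩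
  · ext w
    simp only [ContextFreeGrammar.mem_language_iff]
    constructor
    · intro h
      have := CFGNorm.backward h
      simpa [CFGNorm.projSym, List.map_map, Function.comp_def, CFGNorm.normalize,
        CFGNorm.dec_enc g (CFGNorm.initial_mem_used g)] using this
    · intro h
      have := CFGNorm.forward h
      simpa [CFGNorm.liftSym, CFGNorm.normalize, List.map_map, Function.comp_def] using this
  · intro r hr
    simp only [CFGNorm.normalize, Finset.mem_union, Finset.mem_image, Finset.mem_biUnion,
      List.mem_toFinset, List.mem_filterMap] at hr
    rcases hr with ⟨r', _, rfl⟩ | ⟨r', _, t, _, rfl⟩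
    · left
      intro s hs
      simp only [List.mem_map] at hs
      obtain ⟨s', _, rfl⟩ := hs
      cases s' <;> exact ⟨_, rfl⟩
    · right; left; exact ⟨t, rfl⟩
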